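/- arXiv:1209.3597 — 3 statements merged into one kernel-verified Lean document; each statement's English description precedes it below -/
import Mathlib

section
/- Let $k_1 \geq 1$, $k_2 \geq 0$ and $k = k_1 + k_2$. Let $A : \mathbb{C}^{k_1} \to \mathbb{C}^{k_1}$ and $B : \mathbb{C}^{k_2} \to \mathbb{C}^{k_2}$ be linear maps with $A$ invertible and $\|B\| < \|A^{-1}\|^{-1}$, and set $\xi = 1 - \|B\|\,\|A^{-1}\| \in (0,1]$. Let $0 \leq \xi_0 \leq 1$ and $\delta > 0$ satisfy $\xi_0(1-\xi) + 2\delta(1+\xi_0)\|A^{-1}\| \leq 1$, $\|A^{-1}\|^{-1} - \delta(1+\xi_0) > 0$ and $(\xi_0\|B\| + \delta(1+\xi_0))\,(\|A^{-1}\|^{-1} - \delta(1+\xi_0))^{-1} \leq \xi_0$. Let $0 < R_0 \leq R_1$ and let $g : B_k(0,R_0) \to B_k(0,R_1)$ be holomorphic with $g(0) = 0$, $Dg(0)(x,y) = (Ax, By)$ (block diagonal with respect to the splitting $\mathbb{C}^k = \mathbb{C}^{k_1} \times \mathbb{C}^{k_2}$), and $\|Dg(w) - Dg(0)\| \leq \delta$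 for all $w \in B_k(0,R_0)$. Then for every $0 < R \leq R_0$ and every map $\phi : B_{k_2}(0,R) \to \mathbb{C}^{k_1}$ with $\phi(0) = 0$ and Lipschitz constant $\mathrm{Lip}(\phi) \leq \xi_0$, there exists a map $\psi : B_{k_2}\big(0, R/\max(1, \|B\| + 2\delta)\big) \to \mathbb{C}^{k_1}$ with $\mathrm{Lip}(\psi) \leq \xi_0$ such that $g(\mathrm{graph}(\psi)) \subseteq \mathrm{graph}(\phi)$, where $\mathrm{graph}(\chi) = \{(\chi(y), y) : y \in \mathrm{dom}(\chi)\} \subseteq \mathbb{C}^{k_1} \times \mathbb{C}^{k_2}$. -/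
open Metric Set

set_option maxHeartbeats 2000000
set_option synthInstance.maxHeartbeats 200000

lemma exists_fixedPoint_closedBall {E : Type*} [NormedAddCommGroup E] [CompleteSpace E]
    (F : E → E) (ρ K : ℝ) (hρ : 0 ≤ ρ) (hK0 : 0 ≤ K) (hK : K < 1)
    (hlip : ∀ x ∈ closedBall (0:E) ρ, ∀ y ∈ closedBall (0:E) ρ,
      ‖F x - F y‖ ≤ K * ‖x - y‖)
    (hF0 : ‖F 0‖ ≤ (1 - K) * ρ) :
    ∃ x : E, ‖x‖ ≤ ρ ∧ F x = x := by
  have h0mem : (0:E) ∈ closedBall (0:E) ρ := by simpa using hρ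
  have hmaps : ∀ x ∈ closedBall (0:E) ρ, F x ∈ closedBall (0:E) ρ := by
    intro x hx
    have hx' : ‖x‖ ≤ ρ := by simpa using hx
    have h1 : ‖F x - F 0‖ ≤ K * ‖x - 0‖ := hlip x hx 0 h0mem
    have h2 : ‖F x‖ ≤ ‖F x - F 0‖ + ‖F 0‖ := by
      simpa using norm_add_le (F x - F 0) (F 0)
    simp only [sub_zero] at h1
    simp only [mem_closedBall, dist_zero_right]
    nlinarith [norm_nonneg x]
  haveI : Nonempty (closedBall (0:E) ρ) := ⟨⟨0, h0mem⟩⟩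
  haveI : CompleteSpace (closedBall (0:E) ρ) :=
    (isClosed_closedBall (x := (0:E)) (ε := ρ)).completeSpace_coe
  set F' : closedBall (0:E) ρ → closedBall (0:E) ρ :=
    fun x => ⟨F x, hmaps x x.2⟩ with hF'
  have hcw : ContractingWith K.toNNReal F' := by
    constructor
    · rw [← NNReal.coe_lt_coe]
      simpa [Real.coe_toNNReal _ hK0] using hK
    · apply LipschitzWith.of_dist_le_mul
      intro u v
      have h := hlip u u.2 v v.2
      rw [Subtype.dist_eq, Subtype.dist_eq, dist_eq_norm, dist_eq_norm]
      simpa [Real.coe_toNNReal _ hK0] using h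
  refine ⟨(ContractingWith.fixedPoint F' hcw : closedBall (0:E) ρ), ?_, ?_⟩
  · have := (ContractingWith.fixedPoint F' hcw).2
    exact mem_closedBall_zero_iff.mp this
  · exact congrArg Subtype.val hcw.fixedPoint_isFixedPt



theorem graph_transform_aux
    {E₁ E₂ : Type*} [NormedAddCommGroup E₁] [NormedSpace ℂ E₁] [CompleteSpace E₁]
    [NormedAddCommGroup E₂] [NormedSpace ℂ E₂]
    (A : E₁ ≃L[ℂ] E₁) (B : E₂ →L[ℂ] E₂)
    (hB : ‖B‖ < ‖(A.symm : E₁ →L[ℂ] E₁)‖⁻¹)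
    (ξ0 δ : ℝ) (hξ0 : 0 ≤ ξ0) (hξ0' : ξ0 ≤ 1) (hδ : 0 < δ)
    (hcond2 : 0 < ‖(A.symm : E₁ →L[ℂ] E₁)‖⁻¹ - δ * (1 + ξ0))
    (hcond3 : (ξ0 * ‖B‖ + δ * (1 + ξ0)) *
      (‖(A.symm : E₁ →L[ℂ] E₁)‖⁻¹ - δ * (1 + ξ0))⁻¹ ≤ ξ0)
    (R0 : ℝ) (hR0 : 0 < R0)
    (g : E₁ × E₂ → E₁ × E₂)
    (Dg : E₁ × E₂ → (E₁ × E₂ →L[ℂ] E₁ × E₂))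
    (hdiff : ∀ w ∈ ball (0 : E₁ × E₂) R0, HasFDerivAt g (Dg w) w)
    (hg0 : g 0 = 0)
    (hDg0 : Dg 0 = ContinuousLinearMap.prodMap (A : E₁ →L[ℂ] E₁) B)
    (hclose : ∀ w ∈ ball (0 : E₁ × E₂) R0, ‖Dg w - Dg 0‖ ≤ δ)
    (R : ℝ) (hR : 0 < R) (hRR0 : R ≤ R0)
    (φ : E₂ → E₁) (hφ0 : φ 0 = 0)
    (hφlip : LipschitzOnWith ξ0.toNNReal φ (ball (0 : E₂) R)) :
    ∃ ψ : E₂ → E₁,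
      LipschitzOnWith ξ0.toNNReal ψ (ball (0 : E₂) (R / max 1 (‖B‖ + 2 * δ))) ∧
      g '' {p : E₁ × E₂ |
          p.2 ∈ ball (0 : E₂) (R / max 1 (‖B‖ + 2 * δ)) ∧ p.1 = ψ p.2} ⊆
        {p : E₁ × E₂ | p.2 ∈ ball (0 : E₂) R ∧ p.1 = φ p.2} := by
  classical
  set a : ℝ := ‖(A.symm : E₁ →L[ℂ] E₁)‖ with ha_def
  have ha : 0 < a := by
    rcases lt_or_ge 0 a with h | h
    · exact h
    · exfalso
      have h0 : a = 0 := le_antisymm h (norm_nonneg _)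
      rw [h0, inv_zero] at hB
      exact absurd hB (not_lt.mpr (norm_nonneg B))
  have haa : a * a⁻¹ = 1 := mul_inv_cancel₀ ha.ne'
  set M : ℝ := max 1 (‖B‖ + 2 * δ) with hM_def
  have hM1 : 1 ≤ M := le_max_left _ _
  have hM0 : 0 < M := lt_of_lt_of_le one_pos hM1
  have hMB : ‖B‖ + 2 * δ ≤ M := le_max_right _ _
  set r : ℝ := R / M with hr_def
  have hr : 0 < r := div_pos hR hM0
  have hrR : r ≤ R := div_le_self hR.le hM1
  have hMr : M * r = R := by
    rw [hr_def]; field_simp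
  set K : ℝ := a * (δ * (1 + ξ0)) with hK_def
  have hK0 : 0 ≤ K := by positivity
  have hK1 : K < 1 := by nlinarith [hcond2, ha, haa]
  have ht : (0:ℝ) < a⁻¹ - δ * (1 + ξ0) := hcond2
  have h1 : ξ0 * ‖B‖ + δ * (1 + ξ0) ≤ ξ0 * (a⁻¹ - δ * (1 + ξ0)) := by
    have h := mul_le_mul_of_nonneg_right hcond3 ht.le
    rwa [mul_assoc, inv_mul_cancel₀ ht.ne', mul_one] at h
  have hC : a * (ξ0 * ‖B‖ + δ * (1 + ξ0)) ≤ ξ0 * (1 - K) := by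
    have h := mul_le_mul_of_nonneg_left h1 ha.le
    calc a * (ξ0 * ‖B‖ + δ * (1 + ξ0)) ≤ a * (ξ0 * (a⁻¹ - δ * (1 + ξ0))) := h
      _ = ξ0 * (a * a⁻¹) - ξ0 * (a * (δ * (1 + ξ0))) := by ring
      _ = ξ0 * (1 - K) := by rw [haa, hK_def]; ring
  have hstrict : ξ0 * ‖B‖ + δ * (1 + ξ0) < a⁻¹ := by nlinarith [h1, ht, hδ, hξ0, hξ0']
  -- the key mean value estimate
  have key : ∀ w₁ ∈ ball (0 : E₁ × E₂) R0,
      ∀ w₂ ∈ ball (0 : E₁ × E₂) R0,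
      ‖g w₁ - g w₂ - (Dg 0) (w₁ - w₂)‖ ≤ δ * ‖w₁ - w₂‖ := by
    intro w₁ h₁ w₂ h₂
    have h := Convex.norm_image_sub_le_of_norm_hasFDerivWithin_le
      (f := fun w => g w - Dg 0 w) (f' := fun w => Dg w - Dg 0)
      (fun w hw => ((hdiff w hw).sub ((Dg 0).hasFDerivAt (x := w))).hasFDerivWithinAt)
      (fun w hw => hclose w hw) (convex_ball 0 R0) h₂ h₁
    have e : g w₁ - g w₂ - (Dg 0) (w₁ - w₂) = (g w₁ - Dg 0 w₁) - (g w₂ - Dg 0 w₂) := by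
      rw [map_sub]; abel
    rw [e]; exact h
  have key1 : ∀ w₁ ∈ ball (0 : E₁ × E₂) R0,
      ∀ w₂ ∈ ball (0 : E₁ × E₂) R0,
      ‖(g w₁).1 - (g w₂).1 - A (w₁.1 - w₂.1)‖ ≤ δ * ‖w₁ - w₂‖ := by
    intro w₁ h₁ w₂ h₂
    have h := key w₁ h₁ w₂ h₂
    have e : (g w₁ - g w₂ - (Dg 0) (w₁ - w₂)).1 = (g w₁).1 - (g w₂).1 - A (w₁.1 - w₂.1) := by
      simp [hDg0]
    calc ‖(g w₁).1 - (g w₂).1 - A (w₁.1 - w₂.1)‖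
        = ‖(g w₁ - g w₂ - (Dg 0) (w₁ - w₂)).1‖ := by rw [e]
      _ ≤ ‖g w₁ - g w₂ - (Dg 0) (w₁ - w₂)‖ := norm_fst_le _
      _ ≤ δ * ‖w₁ - w₂‖ := h
  have key2 : ∀ w₁ ∈ ball (0 : E₁ × E₂) R0,
      ∀ w₂ ∈ ball (0 : E₁ × E₂) R0,
      ‖(g w₁).2 - (g w₂).2 - B (w₁.2 - w₂.2)‖ ≤ δ * ‖w₁ - w₂‖ := by
    intro w₁ h₁ w₂ h₂
    have h := key w₁ h₁ w₂ h₂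
    have e : (g w₁ - g w₂ - (Dg 0) (w₁ - w₂)).2 = (g w₁).2 - (g w₂).2 - B (w₁.2 - w₂.2) := by
      simp [hDg0]
    calc ‖(g w₁).2 - (g w₂).2 - B (w₁.2 - w₂.2)‖
        = ‖(g w₁ - g w₂ - (Dg 0) (w₁ - w₂)).2‖ := by rw [e]
      _ ≤ ‖g w₁ - g w₂ - (Dg 0) (w₁ - w₂)‖ := norm_snd_le _
      _ ≤ δ * ‖w₁ - w₂‖ := h
  have hφ' : ∀ u ∈ ball (0 : E₂) R,
      ∀ v ∈ ball (0 : E₂) R, ‖φ u - φ v‖ ≤ ξ0 * ‖u - v‖ := by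
    intro u hu v hv
    have h := (lipschitzOnWith_iff_dist_le_mul.mp hφlip) u hu v hv
    simpa [dist_eq_norm, Real.coe_toNNReal _ hξ0] using h
  have hφ0' : ∀ u ∈ ball (0 : E₂) R, ‖φ u‖ ≤ ξ0 * ‖u‖ := by
    intro u hu
    have h := hφ' u hu 0 (by simpa [mem_ball_zero_iff] using hR)
    simpa [hφ0] using h
  have hzeroR0 : (0 : E₁ × E₂) ∈ ball
      (0 : E₁ × E₂) R0 := by
    simpa [mem_ball_zero_iff] using lt_of_lt_of_le hR hRR0
  have hprodnorm : ∀ (x : E₁) (y : E₂),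
      ‖((x, y) : E₁ × E₂)‖ = max ‖x‖ ‖y‖ :=
    fun x y => rfl
  have hnormxy : ∀ (y' : E₂) (x : E₁),
      ‖x‖ ≤ ξ0 * ‖y'‖ →
      ‖((x, y') : E₁ × E₂)‖ = ‖y'‖ := by
    intro y' x hx
    rw [hprodnorm]
    exact max_eq_right (le_trans hx (by nlinarith [norm_nonneg y']))
  have hmemR0 : ∀ (y' : E₂), ‖y'‖ < r →
      ∀ (x : E₁), ‖x‖ ≤ ξ0 * ‖y'‖ →
      ((x, y') : E₁ × E₂) ∈
        ball (0 : E₁ × E₂) R0 := by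
    intro y' hy' x hx
    rw [mem_ball_zero_iff, hnormxy y' x hx]
    exact lt_of_lt_of_le hy' (le_trans hrR hRR0)
  have hg2lt : ∀ (y' : E₂), ‖y'‖ < r →
      ∀ (x : E₁), ‖x‖ ≤ ξ0 * ‖y'‖ → ‖(g (x, y')).2‖ < R := by
    intro y' hy' x hx
    have h := key2 (x, y') (hmemR0 y' hy' x hx) 0 hzeroR0
    rw [hg0] at h
    simp only [sub_zero, Prod.snd_zero, map_zero] at h
    have h' : ‖(g (x, y')).2 - B y'‖ ≤ δ * ‖y'‖ := by
      have e2 : ((x, y') : E₁ × E₂).2 = y' := rfl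
      rw [hnormxy y' x hx] at h
      simpa using h
    have hBy : ‖B y'‖ ≤ ‖B‖ * ‖y'‖ := B.le_opNorm y'
    have htri : ‖(g (x, y')).2‖ ≤ ‖(g (x, y')).2 - B y'‖ + ‖B y'‖ := by
      simpa using norm_add_le ((g (x, y')).2 - B y') (B y')
    have hlt : (‖B‖ + δ) * ‖y'‖ < R := by
      calc (‖B‖ + δ) * ‖y'‖ ≤ (‖B‖ + δ) * r := by
            apply mul_le_mul_of_nonneg_left hy'.le (by positivity)
        _ < (‖B‖ + 2 * δ) * r := by nlinarith
        _ ≤ M * r := by nlinarith [norm_nonneg B]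
        _ = R := hMr
    nlinarith
  -- existence of the fixed point
  have hexists : ∀ (y' : E₂), ‖y'‖ < r →
      ∃ x : E₁, ‖x‖ ≤ ξ0 * ‖y'‖ ∧
        (g (x, y')).1 = φ ((g (x, y')).2) := by
    intro y' hy'
    set F : E₁ → E₁ :=
      fun x => x - A.symm ((g (x, y')).1 - φ ((g (x, y')).2)) with hF_def
    have hlipF : ∀ x₁ ∈ closedBall (0 : E₁) (ξ0 * ‖y'‖),
        ∀ x₂ ∈ closedBall (0 : E₁) (ξ0 * ‖y'‖),
        ‖F x₁ - F x₂‖ ≤ K * ‖x₁ - x₂‖ := by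
      intro x₁ hx₁ x₂ hx₂
      rw [mem_closedBall_zero_iff] at hx₁ hx₂
      have hm₁ := hmemR0 y' hy' x₁ hx₁
      have hm₂ := hmemR0 y' hy' x₂ hx₂
      have hsub : ((x₁, y') : E₁ × E₂) - (x₂, y')
          = (x₁ - x₂, 0) := by simp
      have hsubn : ‖((x₁, y') : E₁ × E₂) -
          (x₂, y')‖ = ‖x₁ - x₂‖ := by
        rw [hsub, hprodnorm]; simp [norm_nonneg]
      have hk1' := key1 (x₁, y') hm₁ (x₂, y') hm₂
      rw [hsubn] at hk1'
      have hk2' := key2 (x₁, y') hm₁ (x₂, y') hm₂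
      rw [hsubn] at hk2'
      simp only [map_zero] at hk2'
      have hg2' : ‖(g (x₁, y')).2 - (g (x₂, y')).2‖ ≤ δ * ‖x₁ - x₂‖ := by
        have e : ((x₁, y') : E₁ × E₂).2
            - ((x₂, y') : E₁ × E₂).2 = 0 := by simp
        rw [e, map_zero, sub_zero] at hk2'
        exact hk2'
      have hφd : ‖φ ((g (x₁, y')).2) - φ ((g (x₂, y')).2)‖ ≤ ξ0 * (δ * ‖x₁ - x₂‖) := by
        have hb₁ : (g (x₁, y')).2 ∈ ball (0 : E₂) R := by
          rw [mem_ball_zero_iff]; exact hg2lt y' hy' x₁ hx₁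
        have hb₂ : (g (x₂, y')).2 ∈ ball (0 : E₂) R := by
          rw [mem_ball_zero_iff]; exact hg2lt y' hy' x₂ hx₂
        calc ‖φ ((g (x₁, y')).2) - φ ((g (x₂, y')).2)‖
            ≤ ξ0 * ‖(g (x₁, y')).2 - (g (x₂, y')).2‖ := hφ' _ hb₁ _ hb₂
          _ ≤ ξ0 * (δ * ‖x₁ - x₂‖) := by
              apply mul_le_mul_of_nonneg_left hg2' hξ0
      have eF : F x₁ - F x₂ = A.symm (A (x₁ - x₂)
          - ((g (x₁, y')).1 - (g (x₂, y')).1)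
          + (φ ((g (x₁, y')).2) - φ ((g (x₂, y')).2))) := by
        rw [hF_def]
        simp only [map_add, map_sub, ContinuousLinearEquiv.symm_apply_apply]
        abel
      rw [eF]
      calc ‖A.symm (A (x₁ - x₂) - ((g (x₁, y')).1 - (g (x₂, y')).1)
            + (φ ((g (x₁, y')).2) - φ ((g (x₂, y')).2)))‖
          ≤ a * ‖A (x₁ - x₂) - ((g (x₁, y')).1 - (g (x₂, y')).1)
            + (φ ((g (x₁, y')).2) - φ ((g (x₂, y')).2))‖ :=
            (A.symm : E₁ →L[ℂ] E₁).le_opNorm _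
        _ ≤ a * (‖A (x₁ - x₂) - ((g (x₁, y')).1 - (g (x₂, y')).1)‖
            + ‖φ ((g (x₁, y')).2) - φ ((g (x₂, y')).2)‖) := by
            apply mul_le_mul_of_nonneg_left (norm_add_le _ _) ha.le
        _ ≤ a * (δ * ‖x₁ - x₂‖ + ξ0 * (δ * ‖x₁ - x₂‖)) := by
            apply mul_le_mul_of_nonneg_left _ ha.le
            apply add_le_add _ hφd
            rw [show A (x₁ - x₂) - ((g (x₁, y')).1 - (g (x₂, y')).1)
              = -((g (x₁, y')).1 - (g (x₂, y')).1 - A (x₁ - x₂)) by abel, norm_neg]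
            have e1 : ((x₁, y') : E₁ × E₂).1
                - ((x₂, y') : E₁ × E₂).1
                = x₁ - x₂ := rfl
            rw [e1] at hk1'
            exact hk1'
        _ = K * ‖x₁ - x₂‖ := by rw [hK_def]; ring
    have hF0 : ‖F 0‖ ≤ (1 - K) * (ξ0 * ‖y'‖) := by
      have h0le : ‖(0 : E₁)‖ ≤ ξ0 * ‖y'‖ := by
        simp; positivity
      have hm := hmemR0 y' hy' 0 h0le
      have hn0 : ‖((0, y') : E₁ × E₂)‖ = ‖y'‖ :=
        hnormxy y' 0 h0le
      have hk1' := key1 (0, y') hm 0 hzeroR0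
      rw [hg0] at hk1'
      simp only [sub_zero, Prod.fst_zero, map_zero] at hk1'
      rw [hn0] at hk1'
      have hg1n : ‖(g (0, y')).1‖ ≤ δ * ‖y'‖ := by simpa using hk1'
      have hk2' := key2 (0, y') hm 0 hzeroR0
      rw [hg0] at hk2'
      simp only [sub_zero, Prod.snd_zero, map_zero] at hk2'
      rw [hn0] at hk2'
      have hg2n : ‖(g (0, y')).2 - B y'‖ ≤ δ * ‖y'‖ := by simpa using hk2'
      have hg2norm : ‖(g (0, y')).2‖ ≤ (‖B‖ + δ) * ‖y'‖ := by
        have := B.le_opNorm y'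
        have htri : ‖(g (0, y')).2‖ ≤ ‖(g (0, y')).2 - B y'‖ + ‖B y'‖ := by
          simpa using norm_add_le ((g (0, y')).2 - B y') (B y')
        nlinarith
      have hφn : ‖φ ((g (0, y')).2)‖ ≤ ξ0 * ((‖B‖ + δ) * ‖y'‖) := by
        have hb : (g (0, y')).2 ∈ ball (0 : E₂) R := by
          rw [mem_ball_zero_iff]; exact hg2lt y' hy' 0 h0le
        calc ‖φ ((g (0, y')).2)‖ ≤ ξ0 * ‖(g (0, y')).2‖ := hφ0' _ hb
          _ ≤ ξ0 * ((‖B‖ + δ) * ‖y'‖) := mul_le_mul_of_nonneg_left hg2norm hξ0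
      have eF0 : F 0 = -(A.symm ((g (0, y')).1 - φ ((g (0, y')).2))) := by
        rw [hF_def]; simp
      rw [eF0, norm_neg]
      calc ‖A.symm ((g (0, y')).1 - φ ((g (0, y')).2))‖
          ≤ a * ‖(g (0, y')).1 - φ ((g (0, y')).2)‖ :=
            (A.symm : E₁ →L[ℂ] E₁).le_opNorm _
        _ ≤ a * (‖(g (0, y')).1‖ + ‖φ ((g (0, y')).2)‖) := by
            apply mul_le_mul_of_nonneg_left (norm_sub_le _ _) ha.le
        _ ≤ a * (δ * ‖y'‖ + ξ0 * ((‖B‖ + δ) * ‖y'‖)) := by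
            apply mul_le_mul_of_nonneg_left (add_le_add hg1n hφn) ha.le
        _ = (a * (ξ0 * ‖B‖ + δ * (1 + ξ0))) * ‖y'‖ := by ring
        _ ≤ (ξ0 * (1 - K)) * ‖y'‖ := mul_le_mul_of_nonneg_right hC (norm_nonneg y')
        _ = (1 - K) * (ξ0 * ‖y'‖) := by ring
    obtain ⟨x, hx, hfx⟩ := exists_fixedPoint_closedBall F (ξ0 * ‖y'‖) K
      (by positivity) hK0 hK1 hlipF hF0
    refine ⟨x, hx, ?_⟩
    have h0 : A.symm ((g (x, y')).1 - φ ((g (x, y')).2)) = 0 := by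
      have h := hfx
      rw [hF_def] at h
      simpa [sub_eq_self] using h
    have h2 : (g (x, y')).1 - φ ((g (x, y')).2) = 0 := by
      have := congrArg A h0
      simpa using this
    exact sub_eq_zero.mp h2
  -- define ψ
  set ψ : E₂ → E₁ := fun y' =>
    if h : ‖y'‖ < r then (hexists y' h).choose else 0 with hψ_def
  have hψ : ∀ (y' : E₂), ‖y'‖ < r →
      ‖ψ y'‖ ≤ ξ0 * ‖y'‖ ∧ (g (ψ y', y')).1 = φ ((g (ψ y', y')).2) := by
    intro y' hy'
    have e : ψ y' = (hexists y' hy').choose := by rw [hψ_def]; simp [hy']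
    rw [e]
    exact (hexists y' hy').choose_spec
  refine ⟨ψ, ?_, ?_⟩
  · rw [lipschitzOnWith_iff_dist_le_mul]
    intro y₁ h₁ y₂ h₂
    rw [mem_ball_zero_iff] at h₁ h₂
    obtain ⟨hb₁, he₁⟩ := hψ y₁ h₁
    obtain ⟨hb₂, he₂⟩ := hψ y₂ h₂
    have hm₁ := hmemR0 y₁ h₁ (ψ y₁) hb₁
    have hm₂ := hmemR0 y₂ h₂ (ψ y₂) hb₂
    set x₁ := ψ y₁
    set x₂ := ψ y₂
    set d := ‖x₁ - x₂‖ with hd_def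
    set e := ‖y₁ - y₂‖ with he_def
    have hsubn : ‖((x₁, y₁) : E₁ × E₂) -
        (x₂, y₂)‖ = max d e := by
      rw [show ((x₁, y₁) : E₁ × E₂) - (x₂, y₂)
        = (x₁ - x₂, y₁ - y₂) by simp, hprodnorm]
    have hk1' := key1 (x₁, y₁) hm₁ (x₂, y₂) hm₂
    rw [hsubn] at hk1'
    have hk2' := key2 (x₁, y₁) hm₁ (x₂, y₂) hm₂
    rw [hsubn] at hk2'
    have hg2d : ‖(g (x₁, y₁)).2 - (g (x₂, y₂)).2‖ ≤ ‖B‖ * e + δ * max d e := by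
      have htri : ‖(g (x₁, y₁)).2 - (g (x₂, y₂)).2‖
          ≤ ‖(g (x₁, y₁)).2 - (g (x₂, y₂)).2 - B (y₁ - y₂)‖ + ‖B (y₁ - y₂)‖ := by
        simpa using norm_add_le ((g (x₁, y₁)).2 - (g (x₂, y₂)).2 - B (y₁ - y₂)) (B (y₁ - y₂))
      have hBy := B.le_opNorm (y₁ - y₂)
      have e2 : ((x₁, y₁) : E₁ × E₂).2
          - ((x₂, y₂) : E₁ × E₂).2
          = y₁ - y₂ := rfl
      rw [e2] at hk2'
      rw [← he_def] at hBy
      nlinarith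
    have hφd : ‖(g (x₁, y₁)).1 - (g (x₂, y₂)).1‖ ≤ ξ0 * (‖B‖ * e + δ * max d e) := by
      rw [he₁, he₂]
      have hc₁ : (g (x₁, y₁)).2 ∈ ball (0 : E₂) R := by
        rw [mem_ball_zero_iff]; exact hg2lt y₁ h₁ x₁ hb₁
      have hc₂ : (g (x₂, y₂)).2 ∈ ball (0 : E₂) R := by
        rw [mem_ball_zero_iff]; exact hg2lt y₂ h₂ x₂ hb₂
      calc ‖φ ((g (x₁, y₁)).2) - φ ((g (x₂, y₂)).2)‖
          ≤ ξ0 * ‖(g (x₁, y₁)).2 - (g (x₂, y₂)).2‖ := hφ' _ hc₁ _ hc₂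
        _ ≤ ξ0 * (‖B‖ * e + δ * max d e) := mul_le_mul_of_nonneg_left hg2d hξ0
    have hdlea : d ≤ a * ‖A (x₁ - x₂)‖ := by
      calc d = ‖A.symm (A (x₁ - x₂))‖ := by rw [ContinuousLinearEquiv.symm_apply_apply]
        _ ≤ a * ‖A (x₁ - x₂)‖ :=
          (A.symm : E₁ →L[ℂ] E₁).le_opNorm _
    have hAn : ‖A (x₁ - x₂)‖ ≤ ξ0 * (‖B‖ * e + δ * max d e) + δ * max d e := by
      have htri : ‖A (x₁ - x₂)‖ ≤ ‖(g (x₁, y₁)).1 - (g (x₂, y₂)).1‖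
          + ‖(g (x₁, y₁)).1 - (g (x₂, y₂)).1 - A (x₁ - x₂)‖ := by
        have : A (x₁ - x₂) = ((g (x₁, y₁)).1 - (g (x₂, y₂)).1)
            - ((g (x₁, y₁)).1 - (g (x₂, y₂)).1 - A (x₁ - x₂)) := by abel
        conv_lhs => rw [this]
        exact norm_sub_le _ _
      have e1 : ((x₁, y₁) : E₁ × E₂).1
          - ((x₂, y₂) : E₁ × E₂).1
          = x₁ - x₂ := rfl
      rw [e1] at hk1'
      linarith
    have hde : d ≤ e := by
      by_contra hcon
      push_neg at hcon
      have hmax : max d e = d := max_eq_left hcon.le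
      rw [hmax] at hAn
      have h3 : d ≤ a * (ξ0 * (‖B‖ * e + δ * d) + δ * d) :=
        le_trans hdlea (mul_le_mul_of_nonneg_left hAn ha.le)
      have he0 : 0 ≤ e := norm_nonneg _
      have hBn : 0 ≤ ‖B‖ := norm_nonneg _
      nlinarith [hstrict, ha, haa, mul_pos ha (sub_pos.mpr hstrict)]
    have hmax : max d e = e := max_eq_right hde
    rw [hmax] at hAn
    have h3 : d ≤ a * (ξ0 * (‖B‖ * e + δ * e) + δ * e) :=
      le_trans hdlea (mul_le_mul_of_nonneg_left hAn ha.le)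
    have h4 : d ≤ ξ0 * e := by
      have h5 : a * (ξ0 * (‖B‖ * e + δ * e) + δ * e)
          = (a * (ξ0 * ‖B‖ + δ * (1 + ξ0))) * e := by ring
      rw [h5] at h3
      have h6 : (a * (ξ0 * ‖B‖ + δ * (1 + ξ0))) * e ≤ (ξ0 * (1 - K)) * e :=
        mul_le_mul_of_nonneg_right hC (norm_nonneg _)
      nlinarith [mul_nonneg (mul_nonneg hξ0 hK0) (norm_nonneg (y₁ - y₂))]
    rw [dist_eq_norm, dist_eq_norm, Real.coe_toNNReal _ hξ0]
    exact h4
  · rintro p ⟨q, ⟨hq2, hq1⟩, rfl⟩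
    have hq2' : ‖q.2‖ < r := mem_ball_zero_iff.mp hq2
    have hq : q = (ψ q.2, q.2) := Prod.ext hq1 rfl
    obtain ⟨hb, he⟩ := hψ q.2 hq2'
    constructor
    · rw [hq, mem_ball_zero_iff]
      exact hg2lt q.2 hq2' (ψ q.2) hb
    · rw [hq]
      exact he


/-- Graph transform theorem in the non-invertible case. `ℂ^k` is identified with
`ℂ^{k₁} × ℂ^{k₂}` with a product norm; `A` is an invertible linear map of `ℂ^{k₁}`,
`B` a linear map of `ℂ^{k₂}` with `‖B‖ < ‖A⁻¹‖⁻¹`, and `g` is holomorphic on the ball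
`B(0,R₀)`, with `g 0 = 0`, `Dg 0 = (A, B)` block diagonal, `‖Dg w - Dg 0‖ ≤ δ`.
Under the stated arithmetic conditions on `ξ = 1 - ‖B‖‖A⁻¹‖`, `ξ₀` and `δ`, any
`ξ₀`-Lipschitz graph `(φ(y), y)` over `B(0,R)` pulls back under `g` to a
`ξ₀`-Lipschitz graph `(ψ(y), y)` over `B(0, R / max 1 (‖B‖ + 2δ))`. -/
theorem graph_transform_noninvertible
    (k1 k2 : ℕ) (hk1 : 1 ≤ k1)
    (A : EuclideanSpace ℂ (Fin k1) ≃L[ℂ] EuclideanSpace ℂ (Fin k1))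
    (B : EuclideanSpace ℂ (Fin k2) →L[ℂ] EuclideanSpace ℂ (Fin k2))
    (hB : ‖B‖ < ‖(A.symm : EuclideanSpace ℂ (Fin k1) →L[ℂ] EuclideanSpace ℂ (Fin k1))‖⁻¹)
    (ξ ξ0 δ : ℝ)
    (hξ : ξ = 1 - ‖B‖ * ‖(A.symm : EuclideanSpace ℂ (Fin k1) →L[ℂ] EuclideanSpace ℂ (Fin k1))‖)
    (hξ0 : 0 ≤ ξ0) (hξ0' : ξ0 ≤ 1) (hδ : 0 < δ)
    (hcond1 : ξ0 * (1 - ξ) + 2 * δ * (1 + ξ0) *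
      ‖(A.symm : EuclideanSpace ℂ (Fin k1) →L[ℂ] EuclideanSpace ℂ (Fin k1))‖ ≤ 1)
    (hcond2 : 0 <
      ‖(A.symm : EuclideanSpace ℂ (Fin k1) →L[ℂ] EuclideanSpace ℂ (Fin k1))‖⁻¹ - δ * (1 + ξ0))
    (hcond3 : (ξ0 * ‖B‖ + δ * (1 + ξ0)) *
      (‖(A.symm : EuclideanSpace ℂ (Fin k1) →L[ℂ] EuclideanSpace ℂ (Fin k1))‖⁻¹
        - δ * (1 + ξ0))⁻¹ ≤ ξ0)
    (R0 R1 : ℝ) (hR0 : 0 < R0) (hR01 : R0 ≤ R1)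
    (g : EuclideanSpace ℂ (Fin k1) × EuclideanSpace ℂ (Fin k2) →
      EuclideanSpace ℂ (Fin k1) × EuclideanSpace ℂ (Fin k2))
    (Dg : EuclideanSpace ℂ (Fin k1) × EuclideanSpace ℂ (Fin k2) →
      (EuclideanSpace ℂ (Fin k1) × EuclideanSpace ℂ (Fin k2) →L[ℂ]
        EuclideanSpace ℂ (Fin k1) × EuclideanSpace ℂ (Fin k2)))
    (hmaps : MapsTo g (ball (0 : EuclideanSpace ℂ (Fin k1) × EuclideanSpace ℂ (Fin k2)) R0)
      (ball (0 : EuclideanSpace ℂ (Fin k1) × EuclideanSpace ℂ (Fin k2)) R1))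
    (hdiff : ∀ w ∈ ball (0 : EuclideanSpace ℂ (Fin k1) × EuclideanSpace ℂ (Fin k2)) R0,
      HasFDerivAt g (Dg w) w)
    (hg0 : g 0 = 0)
    (hDg0 : Dg 0 =
      ContinuousLinearMap.prodMap
        (A : EuclideanSpace ℂ (Fin k1) →L[ℂ] EuclideanSpace ℂ (Fin k1)) B)
    (hclose : ∀ w ∈ ball (0 : EuclideanSpace ℂ (Fin k1) × EuclideanSpace ℂ (Fin k2)) R0,
      ‖Dg w - Dg 0‖ ≤ δ)
    (R : ℝ) (hR : 0 < R) (hRR0 : R ≤ R0)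
    (φ : EuclideanSpace ℂ (Fin k2) → EuclideanSpace ℂ (Fin k1))
    (hφ0 : φ 0 = 0)
    (hφlip : LipschitzOnWith ξ0.toNNReal φ (ball (0 : EuclideanSpace ℂ (Fin k2)) R)) :
    ∃ ψ : EuclideanSpace ℂ (Fin k2) → EuclideanSpace ℂ (Fin k1),
      LipschitzOnWith ξ0.toNNReal ψ
        (ball (0 : EuclideanSpace ℂ (Fin k2)) (R / max 1 (‖B‖ + 2 * δ))) ∧
      g '' {p : EuclideanSpace ℂ (Fin k1) × EuclideanSpace ℂ (Fin k2) |
          p.2 ∈ ball (0 : EuclideanSpace ℂ (Fin k2)) (R / max 1 (‖B‖ + 2 * δ)) ∧ p.1 = ψ p.2} ⊆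
        {p : EuclideanSpace ℂ (Fin k1) × EuclideanSpace ℂ (Fin k2) |
          p.2 ∈ ball (0 : EuclideanSpace ℂ (Fin k2)) R ∧ p.1 = φ p.2} := by
  exact graph_transform_aux A B hB ξ0 δ hξ0 hξ0' hδ hcond2 hcond3 R0 hR0 g Dg hdiff hg0 hDg0
    hclose R hR hRR0 φ hφ0 hφlip
end

section
/- Let $\Omega$ and $K$ be compact metric spaces with their Borel $\sigma$-algebras, $\Lambda$ a Borel probability measure on $\Omega$, and $F : \Omega \to \Omega$ a measurable map preserving $\Lambda$ that is ergodic with respect to $\Lambda$. Let $\omega \mapsto \mu_\omega$ be a Markov kernel from $\Omega$ to $K$ and $\varphi : \Omega \times K \to K$ a measurable map such that for $\Lambda$-almost every $\omega$, $\varphi(\omega,\cdot)_*\mu_\omega = \mu_{F(\omega)}$. Define $\alpha$ on $\Omega \times K$ by $\alpha(B) = \int_\Omega \mu_\omega(\{x : (\omega,x) \in B\})\,d\Lambda(\omega)$ and $\tau(\omega,x) = (F(\omega), \varphi(\omega,x))$. Assume the following fiberwise decorrelation: for $\Lambda$-almost every $\omega$ and all continuous functions $h, \psi : \Omega \times K \to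 \mathbb{R}$, $\int_K h(\tau^n(\omega,x))\,\psi(\omega,x)\,d\mu_\omega(x) - \Big(\int_K h(F^n(\omega),y)\,d\mu_{F^n(\omega)}(y)\Big)\Big(\int_K \psi(\omega,x)\,d\mu_\omega(x)\Big) \to 0$ as $n \to \infty$. Then $\tau$ is ergodic with respect to $\alpha$. -/
open MeasureTheory ProbabilityTheory Filter Set

/-- Bounded measurable functions on probability spaces are integrable. -/
lemma my_integrable_of_bounded {X : Type*} [MeasurableSpace X] {μ : Measure X}
    [IsFiniteMeasure μ] {g : X → ℝ} (hg : Measurable g) {C : ℝ} (hC : ∀ x, |g x| ≤ C) :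
    Integrable g μ :=
  (integrable_const C).mono' hg.aestronglyMeasurable (ae_of_all _ fun x => by
    simpa using hC x)

/-- Difference of integrals of products. -/
lemma my_abs_integral_mul_sub {X : Type*} [MeasurableSpace X] (μ : Measure X)
    [IsProbabilityMeasure μ] {g1 g2 h1 h2 : X → ℝ}
    (hg1 : Measurable g1) (hg2 : Measurable g2) (hh1 : Measurable h1) (hh2 : Measurable h2)
    (bg1 : ∀ x, |g1 x| ≤ 1) (bg2 : ∀ x, |g2 x| ≤ 1)
    (bh1 : ∀ x, |h1 x| ≤ 1) (bh2 : ∀ x, |h2 x| ≤ 1) :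
    |(∫ x, g1 x * h1 x ∂μ) - ∫ x, g2 x * h2 x ∂μ| ≤
      (∫ x, |g1 x - g2 x| ∂μ) + ∫ x, |h1 x - h2 x| ∂μ := by
  have habs : ∀ (u v : X → ℝ), Measurable u → Measurable v → (∀ x, |u x| ≤ 1) →
      (∀ x, |v x| ≤ 1) → Integrable (fun x => u x * v x) μ := fun u v hu hv bu bv =>
    my_integrable_of_bounded (hu.mul hv) (C := 1) (fun x => by
      rw [abs_mul]
      exact mul_le_one₀ (bu x) (abs_nonneg _) (bv x))
  have key : ∀ x, g1 x * h1 x - g2 x * h2 x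
      = (g1 x - g2 x) * h1 x + g2 x * (h1 x - h2 x) := fun x => by ring
  have i1 : Integrable (fun x => g1 x * h1 x) μ := habs _ _ hg1 hh1 bg1 bh1
  have i2 : Integrable (fun x => g2 x * h2 x) μ := habs _ _ hg2 hh2 bg2 bh2
  rw [← integral_sub i1 i2]
  calc |∫ x, (g1 x * h1 x - g2 x * h2 x) ∂μ|
      ≤ ∫ x, |g1 x * h1 x - g2 x * h2 x| ∂μ := by
        simpa using norm_integral_le_integral_norm (μ := μ) fun x => g1 x * h1 x - g2 x * h2 x
    _ ≤ ∫ x, (|g1 x - g2 x| + |h1 x - h2 x|) ∂μ := by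
        apply integral_mono ((i1.sub i2).abs)
          (((my_integrable_of_bounded (hg1.sub hg2) (C := 2) fun x =>
              (abs_sub (g1 x) (g2 x)).trans (by linarith [bg1 x, bg2 x])).abs).add
            ((my_integrable_of_bounded (hh1.sub hh2) (C := 2) fun x =>
              (abs_sub (h1 x) (h2 x)).trans (by linarith [bh1 x, bh2 x])).abs))
        intro x
        simp only [Pi.sub_apply, Pi.add_apply]
        rw [key x]
        calc |(g1 x - g2 x) * h1 x + g2 x * (h1 x - h2 x)|
            ≤ |(g1 x - g2 x) * h1 x| + |g2 x * (h1 x - h2 x)| := abs_add_le _ _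
          _ ≤ |g1 x - g2 x| * 1 + 1 * |h1 x - h2 x| := by
              rw [abs_mul, abs_mul]
              exact add_le_add (mul_le_mul_of_nonneg_left (bh1 x) (abs_nonneg _))
                (mul_le_mul_of_nonneg_right (bg2 x) (abs_nonneg _))
          _ = |g1 x - g2 x| + |h1 x - h2 x| := by ring
    _ = (∫ x, |g1 x - g2 x| ∂μ) + ∫ x, |h1 x - h2 x| ∂μ := by
        apply integral_add
        · exact (my_integrable_of_bounded (hg1.sub hg2) (C := 2) fun x =>
            (abs_sub (g1 x) (g2 x)).trans (by linarith [bg1 x, bg2 x])).abs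
        · exact (my_integrable_of_bounded (hh1.sub hh2) (C := 2) fun x =>
            (abs_sub (h1 x) (h2 x)).trans (by linarith [bh1 x, bh2 x])).abs

/-- Continuous approximation of indicators in L¹ on compact metric spaces. -/
lemma my_exists_approx {X : Type*} [MetricSpace X] [CompactSpace X] [MeasurableSpace X]
    [BorelSpace X] (μ : Measure X) [IsProbabilityMeasure μ] {A : Set X}
    (hA : MeasurableSet A) {ε : ℝ} (hε : 0 < ε) :
    ∃ f : X → ℝ, Continuous f ∧ (∀ x, 0 ≤ f x) ∧ (∀ x, f x ≤ 1) ∧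
      ∫ x, |f x - A.indicator 1 x| ∂μ ≤ ε := by
  have hε2 : (ENNReal.ofReal (ε / 2)) ≠ 0 := by
    simp [ENNReal.ofReal_eq_zero, not_le, half_pos hε]
  obtain ⟨U, hAU, hUo, hU⟩ := hA.exists_isOpen_diff_lt (measure_ne_top μ A) hε2
  obtain ⟨C, hCA, hCc, hC⟩ := hA.exists_isClosed_diff_lt (measure_ne_top μ A) hε2
  obtain ⟨f, hf0, hf1, hf01⟩ := exists_continuous_zero_one_of_isClosed
    (hUo.isClosed_compl) hCc (by
      rw [Set.disjoint_compl_left_iff_subset]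
      exact hCA.trans hAU)
  refine ⟨f, f.continuous, fun x => (hf01 x).1, fun x => (hf01 x).2, ?_⟩
  have hind : ∀ x, |f x - A.indicator 1 x| ≤ (U \ C).indicator 1 x := by
    intro x
    by_cases hxC : x ∈ C
    · have h1 : f x = 1 := hf1 hxC
      rw [h1, Set.indicator_of_mem (hCA hxC), Pi.one_apply, sub_self, abs_zero]
      exact Set.indicator_nonneg (fun _ _ => (zero_le_one : (0:ℝ) ≤ 1)) x
    · by_cases hxU : x ∈ U
      · have hm : x ∈ U \ C := ⟨hxU, hxC⟩
        rw [indicator_of_mem hm]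
        by_cases hxA : x ∈ A
        · rw [indicator_of_mem hxA]
          simp only [Pi.one_apply]
          rw [abs_sub_comm, abs_of_nonneg (by linarith [(hf01 x).2])]
          linarith [(hf01 x).1]
        · rw [indicator_of_notMem hxA, sub_zero, abs_of_nonneg (hf01 x).1]
          exact (hf01 x).2
      · have h1 : f x = 0 := hf0 hxU
        rw [h1, Set.indicator_of_notMem (fun hxA => hxU (hAU hxA)), sub_self, abs_zero]
        exact Set.indicator_nonneg (fun _ _ => (zero_le_one : (0:ℝ) ≤ 1)) x
  have hUCm : MeasurableSet (U \ C) := hUo.measurableSet.diff hCc.measurableSet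
  have hint1 : Integrable (fun x => |f x - A.indicator 1 x|) μ := by
    refine (Integrable.sub (f.continuous.integrable_of_hasCompactSupport
      (HasCompactSupport.of_compactSpace f)) ?_).abs
    exact (integrable_const 1).indicator hA
  calc ∫ x, |f x - A.indicator 1 x| ∂μ
      ≤ ∫ x, (U \ C).indicator 1 x ∂μ := by
        exact integral_mono hint1 ((integrable_const 1).indicator hUCm) hind
    _ = (μ (U \ C)).toReal := integral_indicator_one hUCm
    _ ≤ ε := by
        have hsub : U \ C ⊆ (U \ A) ∪ (A \ C) := fun x hx => by
          by_cases hxA : x ∈ A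
          · exact Or.inr ⟨hxA, hx.2⟩
          · exact Or.inl ⟨hx.1, hxA⟩
        have : μ (U \ C) ≤ ENNReal.ofReal ε := by
          calc μ (U \ C) ≤ μ ((U \ A) ∪ (A \ C)) := measure_mono hsub
            _ ≤ μ (U \ A) + μ (A \ C) := measure_union_le _ _
            _ ≤ ENNReal.ofReal (ε / 2) + ENNReal.ofReal (ε / 2) :=
                add_le_add hU.2.le hC.le
            _ = ENNReal.ofReal ε := by
                rw [← ENNReal.ofReal_add (by linarith) (by linarith)]
                norm_num
        calc (μ (U \ C)).toReal ≤ (ENNReal.ofReal ε).toReal :=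
              ENNReal.toReal_mono (by simp) this
          _ = ε := ENNReal.toReal_ofReal hε.le

/-- Ergodicity of the skew product measure `α`. `Ω` and `K` are compact metric spaces,
`F` preserves `Λ` and is ergodic, `κ` is a Markov kernel with the a.e. invariance
`φ(ω,·)_* μ_ω = μ_{F ω}`, `α(B) = ∫ μ_ω {x | (ω,x) ∈ B} dΛ(ω)` and
`τ(ω,x) = (F ω, φ(ω,x))`. Under the fiberwise decorrelation hypothesis,
`τ` is ergodic with respect to `α`. -/
theorem skew_product_ergodic
    {Ω K : Type*} [MetricSpace Ω] [CompactSpace Ω] [MeasurableSpace Ω] [BorelSpace Ω]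
    [MetricSpace K] [CompactSpace K] [MeasurableSpace K] [BorelSpace K]
    (Λ : Measure Ω) [IsProbabilityMeasure Λ]
    (F : Ω → Ω) (hF : Ergodic F Λ)
    (κ : Kernel Ω K) [IsMarkovKernel κ]
    (φ : Ω × K → K) (hφ : Measurable φ)
    (hinv : ∀ᵐ ω ∂Λ, Measure.map (fun x => φ (ω, x)) (κ ω) = κ (F ω))
    (α : Measure (Ω × K)) [IsProbabilityMeasure α]
    (hα : ∀ B : Set (Ω × K), MeasurableSet B →
      α B = ∫⁻ ω, κ ω {x | (ω, x) ∈ B} ∂Λ)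
    (hdecor : ∀ᵐ ω ∂Λ, ∀ h ψ : Ω × K → ℝ, Continuous h → Continuous ψ →
      Tendsto (fun n : ℕ =>
        (∫ x, h ((fun p : Ω × K => (F p.1, φ p))^[n] (ω, x)) * ψ (ω, x) ∂(κ ω)) -
          (∫ y, h (F^[n] ω, y) ∂(κ (F^[n] ω))) * (∫ x, ψ (ω, x) ∂(κ ω)))
        atTop (nhds 0)) :
    Ergodic (fun p : Ω × K => (F p.1, φ p)) α := by
  have hFm : Measurable F := hF.toMeasurePreserving.measurable
  have hτm : Measurable (fun p : Ω × K => (F p.1, φ p)) := (hFm.comp measurable_fst).prodMk hφ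
  have hα' : α = Λ.compProd κ := by
    ext B hB
    rw [hα B hB, Measure.compProd_apply hB]
    rfl
  subst hα'
  -- measure preservation of τ
  have hmp : MeasurePreserving (fun p : Ω × K => (F p.1, φ p)) (Λ.compProd κ) (Λ.compProd κ) := by
    refine ⟨hτm, ?_⟩
    ext B hB
    rw [Measure.map_apply hτm hB, Measure.compProd_apply (hτm hB), Measure.compProd_apply hB]
    have hae : ∀ᵐ ω ∂Λ, κ ω (Prod.mk ω ⁻¹' ((fun p : Ω × K => (F p.1, φ p)) ⁻¹' B))
        = κ (F ω) (Prod.mk (F ω) ⁻¹' B) := by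
      filter_upwards [hinv] with ω hω
      have hpre : Prod.mk ω ⁻¹' ((fun p : Ω × K => (F p.1, φ p)) ⁻¹' B)
          = (fun x => φ (ω, x)) ⁻¹' (Prod.mk (F ω) ⁻¹' B) := rfl
      rw [hpre, ← Measure.map_apply (show Measurable fun x => φ (ω, x) from
        hφ.comp measurable_prodMk_left) (measurable_prodMk_left hB), hω]
    rw [lintegral_congr_ae hae]
    exact hF.toMeasurePreserving.lintegral_comp
      (Kernel.measurable_kernel_prodMk_left hB)
  refine ⟨hmp, ⟨fun A hA hAinv => ?_⟩⟩
  rw [eventuallyConst_set']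
  suffices hkey : (Λ.compProd κ) A = 0 ∨ (Λ.compProd κ) A = 1 by
    rcases hkey with h | h
    · left; exact ae_eq_empty.mpr h
    · right; exact ae_eq_univ.mpr ((prob_compl_eq_zero_iff hA).mpr h)
  -- notation
  set τ : Ω × K → Ω × K := fun p => (F p.1, φ p) with hτdef
  set a : ℝ := ((Λ.compProd κ) A).toReal with hadef
  suffices haa : a = a * a by
    have h0 : a * (a - 1) = 0 := by rw [mul_sub, mul_one, ← haa, sub_self]
    rcases mul_eq_zero.mp h0 with h | h
    · left
      rcases (ENNReal.toReal_eq_zero_iff _).mp h with h' | h'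
      · exact h'
      · exact absurd h' (measure_ne_top _ _)
    · right
      have : a = 1 := by linarith
      exact (ENNReal.toReal_eq_one_iff _).mp this
  -- the fiber measure of the section of A
  set e : Ω → ℝ := fun ω => (κ ω (Prod.mk ω ⁻¹' A)).toReal with hedef
  have hem : Measurable e := (Kernel.measurable_kernel_prodMk_left hA).ennreal_toReal
  have he0 : ∀ ω, 0 ≤ e ω := fun ω => ENNReal.toReal_nonneg
  have he1 : ∀ ω, e ω ≤ 1 := fun ω => by
    have h := prob_le_one (μ := κ ω) (s := Prod.mk ω ⁻¹' A)
    have h2 : ((κ ω) (Prod.mk ω ⁻¹' A)).toReal ≤ (1 : ENNReal).toReal :=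
      ENNReal.toReal_mono ENNReal.one_ne_top h
    simpa using h2
  have heabs : ∀ ω, |e ω| ≤ 1 := fun ω => abs_le.mpr ⟨by linarith [he0 ω], he1 ω⟩
  -- e is F-invariant a.e.
  have heF : e ∘ F =ᵐ[Λ] e := by
    filter_upwards [hinv] with ω hω
    have hpre : (fun x => φ (ω, x)) ⁻¹' (Prod.mk (F ω) ⁻¹' A) = Prod.mk ω ⁻¹' A := by
      conv_rhs => rw [← hAinv]
      rfl
    show (κ (F ω) (Prod.mk (F ω) ⁻¹' A)).toReal = (κ ω (Prod.mk ω ⁻¹' A)).toReal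
    rw [← hω, Measure.map_apply (show Measurable fun x => φ (ω, x) from
      hφ.comp measurable_prodMk_left) (measurable_prodMk_left hA), hpre]
  obtain ⟨c, hc⟩ := hF.ae_eq_const_of_ae_eq_comp₀ hem.nullMeasurable heF
  have hint_e : Integrable e Λ := my_integrable_of_bounded hem heabs
  -- c = a
  have hca : c = a := by
    have h1 : ∫ ω, e ω ∂Λ = c := by
      rw [integral_congr_ae hc]
      simp
    have h2 : ∫ ω, e ω ∂Λ = a := by
      rw [hedef]
      rw [integral_toReal ((Kernel.measurable_kernel_prodMk_left hA).aemeasurable)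
        (ae_of_all _ fun ω => measure_lt_top _ _)]
      rw [hadef, Measure.compProd_apply hA]
    rw [← h1, h2]
  -- the invariant indicator
  set g : Ω × K → ℝ := A.indicator 1 with hgdef
  have hgm : Measurable g := measurable_one.indicator hA
  have hg0 : ∀ p, 0 ≤ g p := fun p => Set.indicator_nonneg (fun _ _ => zero_le_one) p
  have hg1 : ∀ p, g p ≤ 1 := fun p => by
    by_cases hp : p ∈ A <;> simp [hgdef, Set.indicator, hp]
  have hgabs : ∀ p, |g p| ≤ 1 := fun p => abs_le.mpr ⟨by linarith [hg0 p], hg1 p⟩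
  have hiter : ∀ n : ℕ, τ^[n] ⁻¹' A = A := fun n => Function.IsFixedPt.preimage_iterate hAinv n
  have hgτ : ∀ (n : ℕ) p, g (τ^[n] p) = g p := by
    intro n p
    by_cases hp : p ∈ A
    · have hp2 : τ^[n] p ∈ A := by
        have : p ∈ τ^[n] ⁻¹' A := by rw [hiter n]; exact hp
        exact this
      simp [hgdef, Set.indicator, hp, hp2]
    · have hp2 : τ^[n] p ∉ A := fun hmem => hp (by
        have : p ∈ τ^[n] ⁻¹' A := hmem
        rwa [hiter n] at this)
      simp [hgdef, Set.indicator, hp, hp2]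
  have hgg : ∀ p, g p * g p = g p := fun p => by
    by_cases hp : p ∈ A <;> simp [hgdef, Set.indicator, hp]
  have hag : ∫ p, g p ∂(Λ.compProd κ) = a := by
    rw [hgdef, hadef]
    exact integral_indicator_one hA
  -- main quantitative estimate
  have hmain : ∀ ε : ℝ, 0 < ε → |a - c * c| ≤ 5 * ε := by
    intro ε hε
    obtain ⟨f, hfc, hf0, hf1, hfL1⟩ := my_exists_approx (Λ.compProd κ) hA hε
    have hfm : Measurable f := hfc.measurable
    have hfabs : ∀ p, |f p| ≤ 1 := fun p => abs_le.mpr ⟨by linarith [hf0 p], hf1 p⟩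
    have hfgL1 : ∫ p, |f p - g p| ∂(Λ.compProd κ) ≤ ε := by rw [hgdef]; exact hfL1
    have hfgm : Measurable fun p => |f p - g p| := (hfm.sub hgm).abs
    have hfgint : Integrable (fun p => |f p - g p|) (Λ.compProd κ) :=
      my_integrable_of_bounded hfgm (C := 2) (fun p => by
        rw [abs_abs]
        exact (abs_sub _ _).trans (by linarith [hfabs p, hgabs p]))
    set H : Ω → ℝ := fun ω => ∫ y, f (ω, y) ∂κ ω with hHdef
    have hHm : Measurable H := hfm.stronglyMeasurable.integral_kernel_prod_right'.measurable
    have hHabs : ∀ ω, |H ω| ≤ 1 := fun ω => by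
      have h := norm_integral_le_of_norm_le_const (μ := κ ω) (f := fun y => f (ω, y)) (C := 1)
        (ae_of_all _ fun y => by simpa using hfabs (ω, y))
      simpa using h
    have hfibint : ∀ ω, Integrable (fun y => f (ω, y)) (κ ω) := fun ω =>
      my_integrable_of_bounded (hfm.comp measurable_prodMk_left) (fun y => hfabs _)
    have hgfibint : ∀ ω, Integrable (fun x => g (ω, x)) (κ ω) := fun ω =>
      my_integrable_of_bounded (hgm.comp measurable_prodMk_left) (fun y => hgabs _)
    have hgfib : ∀ ω, ∫ x, g (ω, x) ∂κ ω = e ω := by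
      intro ω
      have hfe : ∀ x, g (ω, x) = (Prod.mk ω ⁻¹' A).indicator 1 x := fun x => by
        by_cases hx : (ω, x) ∈ A
        · simp [hgdef, Set.indicator, hx, Set.mem_preimage]
        · simp [hgdef, Set.indicator, hx, Set.mem_preimage]
      calc ∫ x, g (ω, x) ∂κ ω = ∫ x, (Prod.mk ω ⁻¹' A).indicator 1 x ∂κ ω :=
            integral_congr_ae (ae_of_all _ hfe)
        _ = e ω := integral_indicator_one (measurable_prodMk_left hA)
    have hHe : ∀ ω, |H ω - e ω| ≤ ∫ x, |f (ω, x) - g (ω, x)| ∂κ ω := by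
      intro ω
      rw [← hgfib ω, ← integral_sub (hfibint ω) (hgfibint ω)]
      simpa using norm_integral_le_integral_norm (μ := κ ω) fun x => f (ω, x) - g (ω, x)
    have hNm : Measurable fun ω => ∫ x, |f (ω, x) - g (ω, x)| ∂κ ω :=
      hfgm.stronglyMeasurable.integral_kernel_prod_right'.measurable
    have hNint : Integrable (fun ω => ∫ x, |f (ω, x) - g (ω, x)| ∂κ ω) Λ := by
      refine my_integrable_of_bounded hNm (C := 2) (fun ω => ?_)
      have h := norm_integral_le_of_norm_le_const (μ := κ ω)
        (f := fun x => |f (ω, x) - g (ω, x)|) (C := 2)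
        (ae_of_all _ fun x => by
          rw [Real.norm_eq_abs, abs_abs]
          exact (abs_sub _ _).trans (by linarith [hfabs (ω, x), hgabs (ω, x)]))
      simpa using h
    have hHeint : Integrable (fun ω => |H ω - e ω|) Λ :=
      my_integrable_of_bounded ((hHm.sub hem).abs) (C := 2) (fun ω => by
        rw [abs_abs]
        exact (abs_sub _ _).trans (by linarith [hHabs ω, heabs ω]))
    have hHeL1 : ∫ ω, |H ω - e ω| ∂Λ ≤ ε := by
      calc ∫ ω, |H ω - e ω| ∂Λ ≤ ∫ ω, ∫ x, |f (ω, x) - g (ω, x)| ∂κ ω ∂Λ :=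
            integral_mono hHeint hNint hHe
        _ = ∫ p, |f p - g p| ∂(Λ.compProd κ) := (Measure.integral_compProd hfgint).symm
        _ ≤ ε := hfgL1
    have hτnm : ∀ n : ℕ, Measurable (τ^[n]) := fun n => hτm.iterate n
    have hτn_pres : ∀ n : ℕ, MeasurePreserving (τ^[n]) (Λ.compProd κ) (Λ.compProd κ) :=
      fun n => hmp.iterate n
    have hFnm : ∀ n : ℕ, Measurable (F^[n]) := fun n => hFm.iterate n
    have hIn_int : ∀ n : ℕ, Integrable (fun p => f (τ^[n] p) * f p) (Λ.compProd κ) := fun n =>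
      my_integrable_of_bounded ((hfm.comp (hτnm n)).mul hfm) (C := 1) (fun p => by
        rw [abs_mul]
        exact mul_le_one₀ (hfabs _) (abs_nonneg _) (hfabs _))
    have hIn_m : ∀ n : ℕ, Measurable fun ω => ∫ x, f (τ^[n] (ω, x)) * f (ω, x) ∂κ ω := fun n =>
      (((hfm.comp (hτnm n)).mul hfm).stronglyMeasurable.integral_kernel_prod_right').measurable
    have hIn_abs : ∀ (n : ℕ) ω, |∫ x, f (τ^[n] (ω, x)) * f (ω, x) ∂κ ω| ≤ 1 := fun n ω => by
      have h := norm_integral_le_of_norm_le_const (μ := κ ω)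
        (f := fun x => f (τ^[n] (ω, x)) * f (ω, x)) (C := 1)
        (ae_of_all _ fun x => by
          rw [Real.norm_eq_abs, abs_mul]
          exact mul_le_one₀ (hfabs _) (abs_nonneg _) (hfabs _))
      simpa using h
    -- first estimate
    have hE1 : ∀ n : ℕ, |(∫ ω, (∫ x, f (τ^[n] (ω, x)) * f (ω, x) ∂κ ω) ∂Λ) - a| ≤ 2 * ε := by
      intro n
      have step1 : ∫ ω, (∫ x, f (τ^[n] (ω, x)) * f (ω, x) ∂κ ω) ∂Λ
          = ∫ p, f (τ^[n] p) * f p ∂(Λ.compProd κ) := (Measure.integral_compProd (hIn_int n)).symm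
      have step2 : ∫ p, g (τ^[n] p) * g p ∂(Λ.compProd κ) = a := by
        have hpt : ∀ p, g (τ^[n] p) * g p = g p := fun p => by rw [hgτ n p, hgg p]
        rw [integral_congr_ae (ae_of_all _ hpt), hag]
      have step3 : ∫ p, |f (τ^[n] p) - g (τ^[n] p)| ∂(Λ.compProd κ)
          = ∫ p, |f p - g p| ∂(Λ.compProd κ) := by
        conv_rhs => rw [← (hτn_pres n).map_eq]
        rw [integral_map (hτnm n).aemeasurable (by
          rw [(hτn_pres n).map_eq]
          exact hfgm.aestronglyMeasurable)]
      rw [step1, ← step2]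
      calc |(∫ p, f (τ^[n] p) * f p ∂(Λ.compProd κ))
            - ∫ p, g (τ^[n] p) * g p ∂(Λ.compProd κ)|
          ≤ (∫ p, |f (τ^[n] p) - g (τ^[n] p)| ∂(Λ.compProd κ))
            + ∫ p, |f p - g p| ∂(Λ.compProd κ) :=
            my_abs_integral_mul_sub (Λ.compProd κ) (hfm.comp (hτnm n)) (hgm.comp (hτnm n))
              hfm hgm (fun p => hfabs _) (fun p => hgabs _) hfabs hgabs
        _ = (∫ p, |f p - g p| ∂(Λ.compProd κ)) + ∫ p, |f p - g p| ∂(Λ.compProd κ) := by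
            rw [step3]
        _ ≤ 2 * ε := by linarith [hfgL1]
    -- second estimate
    have hE2 : ∀ n : ℕ, |(∫ ω, H (F^[n] ω) * H ω ∂Λ) - c * c| ≤ 2 * ε := by
      intro n
      have hFn := hF.toMeasurePreserving.iterate n
      have hcn : (fun ω => e (F^[n] ω)) =ᵐ[Λ] fun _ => c := by
        have h := ae_eq_comp (g := e) (g' := fun (_ : Ω) => c) (hFnm n).aemeasurable (by
          rw [hFn.map_eq]; exact hc)
        exact h
      have step : ∫ ω, e (F^[n] ω) * e ω ∂Λ = c * c := by
        have hcc : (fun ω => e (F^[n] ω) * e ω) =ᵐ[Λ] fun _ => c * c := hcn.mul hc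
        rw [integral_congr_ae hcc]
        simp
      have step3 : ∫ ω, |H (F^[n] ω) - e (F^[n] ω)| ∂Λ = ∫ ω, |H ω - e ω| ∂Λ := by
        conv_rhs => rw [← hFn.map_eq]
        rw [integral_map (hFnm n).aemeasurable (by
          rw [hFn.map_eq]
          exact ((hHm.sub hem).abs).aestronglyMeasurable)]
      rw [← step]
      calc |(∫ ω, H (F^[n] ω) * H ω ∂Λ) - ∫ ω, e (F^[n] ω) * e ω ∂Λ|
          ≤ (∫ ω, |H (F^[n] ω) - e (F^[n] ω)| ∂Λ) + ∫ ω, |H ω - e ω| ∂Λ :=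
            my_abs_integral_mul_sub Λ (hHm.comp (hFnm n)) (hem.comp (hFnm n)) hHm hem
              (fun ω => hHabs _) (fun ω => heabs _) hHabs heabs
        _ = (∫ ω, |H ω - e ω| ∂Λ) + ∫ ω, |H ω - e ω| ∂Λ := by rw [step3]
        _ ≤ 2 * ε := by linarith [hHeL1]
    -- integrated decorrelation
    have hJint : ∀ n : ℕ, Integrable (fun ω => H (F^[n] ω) * H ω) Λ := fun n =>
      my_integrable_of_bounded ((hHm.comp (hFnm n)).mul hHm) (C := 1) (fun ω => by
        rw [abs_mul]
        exact mul_le_one₀ (hHabs _) (abs_nonneg _) (hHabs _))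
    have hIint : ∀ n : ℕ, Integrable (fun ω => ∫ x, f (τ^[n] (ω, x)) * f (ω, x) ∂κ ω) Λ :=
      fun n => my_integrable_of_bounded (hIn_m n) (fun ω => hIn_abs n ω)
    have hDtend : Tendsto (fun n => ∫ ω,
        ((∫ x, f (τ^[n] (ω, x)) * f (ω, x) ∂κ ω) - H (F^[n] ω) * H ω) ∂Λ) atTop (nhds 0) := by
      have h := tendsto_integral_of_dominated_convergence (μ := Λ)
        (F := fun n ω => (∫ x, f (τ^[n] (ω, x)) * f (ω, x) ∂κ ω) - H (F^[n] ω) * H ω)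
        (f := fun _ => (0 : ℝ)) (bound := fun _ => (2 : ℝ))
        (fun n => ((hIn_m n).sub ((hHm.comp (hFnm n)).mul hHm)).aestronglyMeasurable)
        (integrable_const 2)
        (fun n => ae_of_all _ fun ω => by
          simp only [Real.norm_eq_abs]
          have h1 := hIn_abs n ω
          have h2 : |H (F^[n] ω) * H ω| ≤ 1 := by
            rw [abs_mul]
            exact mul_le_one₀ (hHabs _) (abs_nonneg _) (hHabs _)
          have := abs_sub (∫ x, f (τ^[n] (ω, x)) * f (ω, x) ∂κ ω) (H (F^[n] ω) * H ω)
          linarith)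
        (by
          filter_upwards [hdecor] with ω hω
          exact hω f f hfc hfc)
      simpa using h
    have hxsmall : ∀ᶠ n in atTop, |∫ ω,
        ((∫ x, f (τ^[n] (ω, x)) * f (ω, x) ∂κ ω) - H (F^[n] ω) * H ω) ∂Λ| < ε := by
      have h := Metric.tendsto_nhds.mp hDtend ε hε
      simpa [Real.dist_eq] using h
    obtain ⟨n, hn⟩ := hxsmall.exists
    have hsplit : ∫ ω, ((∫ x, f (τ^[n] (ω, x)) * f (ω, x) ∂κ ω) - H (F^[n] ω) * H ω) ∂Λ
        = (∫ ω, (∫ x, f (τ^[n] (ω, x)) * f (ω, x) ∂κ ω) ∂Λ) - ∫ ω, H (F^[n] ω) * H ω ∂Λ :=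
      integral_sub (hIint n) (hJint n)
    rw [hsplit] at hn
    have h1 := abs_le.mp (hE1 n)
    have h2 := abs_le.mp (hE2 n)
    have h3 := abs_lt.mp hn
    rw [abs_le]
    constructor <;> linarith
  -- conclude
  have hacc : a = c * c := by
    by_contra hne
    have hpos : 0 < |a - c * c| := abs_pos.mpr (sub_ne_zero.mpr hne)
    have h := hmain (|a - c * c| / 6) (by linarith)
    linarith
  calc a = c * c := hacc
    _ = a * a := by rw [hca]
end

section
/- Let $\Omega$ and $K$ be compact metric spaces with their Borel $\sigma$-algebras, $\Lambda$ a Borel probability measure on $\Omega$, and $F : \Omega \to \Omega$ a measurable map preserving $\Lambda$ that is mixing, i.e. for all bounded measurable $u, v : \Omega \to \mathbb{R}$, $\int u(F^n(\omega))\,v(\omega)\,d\Lambda(\omega) \to \int u\,d\Lambda \int v\,d\Lambda$. Let $\omega \mapsto \mu_\omega$ be a Markov kernel from $\Omega$ to $K$ and $\varphi : \Omega \times K \to K$ a measurable map such that for $\Lambda$-almost every $\omega$, $\varphi(\omega,\cdot)_*\mu_\omega = \mu_{F(\omega)}$. Define $\alpha$ on $\Omega \times K$ by $\alpha(B) = \int_\Omega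 \mu_\omega(\{x : (\omega,x) \in B\})\,d\Lambda(\omega)$ and $\tau(\omega,x) = (F(\omega), \varphi(\omega,x))$. Assume that for $\Lambda$-almost every $\omega$ and all continuous functions $h, \psi : \Omega \times K \to \mathbb{R}$, $\int_K h(\tau^n(\omega,x))\,\psi(\omega,x)\,d\mu_\omega(x) - \Big(\int_K h(F^n(\omega),y)\,d\mu_{F^n(\omega)}(y)\Big)\Big(\int_K \psi(\omega,x)\,d\mu_\omega(x)\Big) \to 0$ as $n \to \infty$. Then $\tau$ is mixing with respect to $\alpha$: for all Borel sets $A, B \subseteq \Omega \times K$, $\alpha(\tau^{-n}(A) \cap B) \to \alpha(A)\,\alpha(B)$ as $n \to \infty$. -/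
open MeasureTheory ProbabilityTheory Filter Set

lemma integrable_of_bdd' {X : Type*} [MeasurableSpace X] {μ : Measure X} [IsFiniteMeasure μ]
    {h : X → ℝ} (hm : AEStronglyMeasurable h μ) {C : ℝ} (hb : ∀ x, |h x| ≤ C) :
    Integrable h μ :=
  ⟨hm, HasFiniteIntegral.of_bounded (ae_of_all _ (by simpa [Real.norm_eq_abs] using hb))⟩

lemma abs_mul_sub_mul_le {a b c d : ℝ} (hb : |b| ≤ 1) (hc : |c| ≤ 1) :
    |a * b - c * d| ≤ |a - c| + |b - d| := by
  have h : a * b - c * d = (a - c) * b + c * (b - d) := by ring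
  have h1 : |a * b - c * d| ≤ |a - c| * |b| + |c| * |b - d| := by
    rw [h]
    exact (abs_add_le _ _).trans (by rw [abs_mul, abs_mul])
  nlinarith [abs_nonneg (a - c), abs_nonneg (b - d), abs_nonneg b, abs_nonneg c]

lemma abs_int_le {X : Type*} [MeasurableSpace X] (μ : Measure X) (f : X → ℝ) :
    |∫ x, f x ∂μ| ≤ ∫ x, |f x| ∂μ := by
  simpa [Real.norm_eq_abs] using norm_integral_le_integral_norm (μ := μ) f

/-- Continuous approximation of indicator functions in L¹ on compact metric spaces. -/
lemma exists_cont_approx {X : Type*} [MetricSpace X] [CompactSpace X] [MeasurableSpace X]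
    [BorelSpace X] (μ : Measure X) [IsProbabilityMeasure μ] {A : Set X}
    (hA : MeasurableSet A) {ε : ℝ} (hε : 0 < ε) :
    ∃ f : X → ℝ, Continuous f ∧ (∀ x, f x ∈ Set.Icc (0:ℝ) 1) ∧
      ∫ x, |f x - A.indicator 1 x| ∂μ ≤ ε := by
  have hε2 : (ENNReal.ofReal (ε/2)) ≠ 0 := by
    simp only [ne_eq, ENNReal.ofReal_eq_zero, not_le]; linarith
  obtain ⟨U, hAU, hUo, hU⟩ := A.exists_isOpen_lt_add (μ := μ) (measure_ne_top μ A) hε2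
  obtain ⟨C, hCA, hCc, hC⟩ := hA.exists_isClosed_lt_add (μ := μ) (measure_ne_top μ A) hε2
  have hdisj : Disjoint Uᶜ C := by
    rw [Set.disjoint_compl_left_iff_subset]
    exact hCA.trans hAU
  obtain ⟨f, hf0, hf1, hf01⟩ :=
    exists_continuous_zero_one_of_isClosed hUo.isClosed_compl hCc hdisj
  have h' : μ (U \ C) < ENNReal.ofReal ε := by
    have hUC : μ U < μ C + ENNReal.ofReal ε := by
      have h1 : μ A < μ C + ENNReal.ofReal (ε/2) := hC
      have : μ U < μ C + ENNReal.ofReal (ε/2) + ENNReal.ofReal (ε/2) :=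
        lt_of_lt_of_le hU (add_le_add h1.le le_rfl)
      calc μ U < μ C + ENNReal.ofReal (ε/2) + ENNReal.ofReal (ε/2) := this
        _ = μ C + ENNReal.ofReal ε := by
            rw [add_assoc, ← ENNReal.ofReal_add (by linarith) (by linarith)]
            norm_num
    exact measure_diff_lt_of_lt_add hCc.nullMeasurableSet (hCA.trans hAU)
      (measure_ne_top μ C) hUC
  have hpt : ∀ x, |f x - A.indicator 1 x| ≤ (U \ C).indicator 1 x := by
    intro x
    by_cases hxC : x ∈ C
    · have : f x = 1 := hf1 hxC
      have hxA : x ∈ A := hCA hxC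
      rw [this, Set.indicator_of_mem hxA]
      simp only [Pi.one_apply, sub_self, abs_zero]
      exact Set.indicator_nonneg (fun _ _ => zero_le_one) x
    · by_cases hxU : x ∈ U
      · have h1 : (U \ C).indicator (1 : X → ℝ) x = 1 :=
          Set.indicator_of_mem (show x ∈ U \ C from ⟨hxU, hxC⟩) _
        rw [h1]
        have hf := hf01 x
        have hiA : A.indicator (1 : X → ℝ) x ∈ Set.Icc (0:ℝ) 1 := by
          by_cases h : x ∈ A <;> simp [h]
        rw [abs_sub_le_iff]
        constructor <;> [linarith [hf.1, hf.2, hiA.1, hiA.2];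
          linarith [hf.1, hf.2, hiA.1, hiA.2]]
      · have : f x = 0 := hf0 hxU
        have hxA : x ∉ A := fun h => hxU (hAU h)
        simp [this, Set.indicator_of_notMem hxA, Set.indicator_apply, Set.mem_diff, hxU]
  have hind : Integrable (fun x => |f x - A.indicator 1 x|) μ := by
    refine integrable_of_bdd' (C := 2) ?_ ?_
    · exact ((f.continuous.measurable.sub
        (measurable_one.indicator hA)).abs).aestronglyMeasurable
    · intro x
      have hf := hf01 x
      have hiA : A.indicator (1 : X → ℝ) x ∈ Set.Icc (0:ℝ) 1 := by
        by_cases h : x ∈ A <;> simp [h]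
      rw [abs_abs, abs_sub_le_iff]
      constructor <;> linarith [hf.1, hf.2, hiA.1, hiA.2]
  have hind2 : Integrable ((U \ C).indicator (1 : X → ℝ)) μ := by
    refine integrable_of_bdd' (C := 1) ?_ ?_
    · exact (measurable_one.indicator (hUo.measurableSet.diff hCc.measurableSet)
        ).aestronglyMeasurable
    · intro x
      by_cases h : x ∈ U \ C <;> simp [h]
  refine ⟨f, f.continuous, hf01, ?_⟩
  calc ∫ x, |f x - A.indicator 1 x| ∂μ ≤ ∫ x, (U \ C).indicator 1 x ∂μ :=
        integral_mono hind hind2 hpt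
    _ = (μ (U \ C)).toReal :=
        integral_indicator_one (hUo.measurableSet.diff hCc.measurableSet)
    _ ≤ ε := ENNReal.toReal_le_of_le_ofReal hε.le h'.le

/-- Mixing of the skew product measure `α`. `Ω` and `K` are compact metric spaces,
`F` preserves `Λ` and is mixing, `κ` is a Markov kernel with the a.e. invariance
`φ(ω,·)_* μ_ω = μ_{F ω}`, `α(B) = ∫ μ_ω {x | (ω,x) ∈ B} dΛ(ω)` and
`τ(ω,x) = (F ω, φ(ω,x))`. Under the fiberwise decorrelation hypothesis,
`τ` is mixing with respect to `α`: `α(τ⁻ⁿ A ∩ B) → α(A) α(B)` for all Borel `A`, `B`. -/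
theorem skew_product_mixing
    {Ω K : Type*} [MetricSpace Ω] [CompactSpace Ω] [MeasurableSpace Ω] [BorelSpace Ω]
    [MetricSpace K] [CompactSpace K] [MeasurableSpace K] [BorelSpace K]
    (Λ : Measure Ω) [IsProbabilityMeasure Λ]
    (F : Ω → Ω) (hF : Measurable F) (hFΛ : Measure.map F Λ = Λ)
    (hmix : ∀ u v : Ω → ℝ, Measurable u → Measurable v →
      (∃ Cu : ℝ, ∀ ω, |u ω| ≤ Cu) → (∃ Cv : ℝ, ∀ ω, |v ω| ≤ Cv) →
      Tendsto (fun n : ℕ => ∫ ω, u (F^[n] ω) * v ω ∂Λ) atTop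
        (nhds ((∫ ω, u ω ∂Λ) * (∫ ω, v ω ∂Λ))))
    (κ : Kernel Ω K) [IsMarkovKernel κ]
    (φ : Ω × K → K) (hφ : Measurable φ)
    (hinv : ∀ᵐ ω ∂Λ, Measure.map (fun x => φ (ω, x)) (κ ω) = κ (F ω))
    (α : Measure (Ω × K)) [IsProbabilityMeasure α]
    (hα : ∀ B : Set (Ω × K), MeasurableSet B →
      α B = ∫⁻ ω, κ ω {x | (ω, x) ∈ B} ∂Λ)
    (hdecor : ∀ᵐ ω ∂Λ, ∀ h ψ : Ω × K → ℝ, Continuous h → Continuous ψ →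
      Tendsto (fun n : ℕ =>
        (∫ x, h ((fun p : Ω × K => (F p.1, φ p))^[n] (ω, x)) * ψ (ω, x) ∂(κ ω)) -
          (∫ y, h (F^[n] ω, y) ∂(κ (F^[n] ω))) * (∫ x, ψ (ω, x) ∂(κ ω)))
        atTop (nhds 0)) :
    ∀ A B : Set (Ω × K), MeasurableSet A → MeasurableSet B →
      Tendsto (fun n : ℕ => α ((fun p : Ω × K => (F p.1, φ p))^[n] ⁻¹' A ∩ B)) atTop
        (nhds (α A * α B)) := by
  intro A B hA hB
  set τ : Ω × K → Ω × K := fun p => (F p.1, φ p) with hτdef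
  have hτ : Measurable τ := (hF.comp measurable_fst).prodMk hφ
  have hτn : ∀ n, Measurable (τ^[n]) := fun n => hτ.iterate n
  have hαeq : α = Λ.compProd κ := by
    ext s hs
    rw [hα s hs, Measure.compProd_apply hs]
    rfl
  have hτpres : MeasurePreserving τ α α := by
    refine ⟨hτ, ?_⟩
    ext s hs
    rw [Measure.map_apply hτ hs, hα _ (hτ hs), hα s hs]
    have step1 : ∀ᵐ ω ∂Λ, κ ω {x | (ω, x) ∈ τ ⁻¹' s} = κ (F ω) (Prod.mk (F ω) ⁻¹' s) := by
      filter_upwards [hinv] with ω hω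
      rw [← hω, Measure.map_apply
        (show Measurable fun x : K => φ (ω, x) from hφ.comp measurable_prodMk_left)
        (measurable_prodMk_left hs)]
      rfl
    rw [lintegral_congr_ae step1]
    have hg : Measurable (fun ω => κ ω (Prod.mk ω ⁻¹' s)) :=
      Kernel.measurable_kernel_prodMk_left hs
    calc ∫⁻ ω, κ (F ω) (Prod.mk (F ω) ⁻¹' s) ∂Λ
        = ∫⁻ ω, κ ω (Prod.mk ω ⁻¹' s) ∂(Λ.map F) := (lintegral_map hg hF).symm
      _ = ∫⁻ ω, κ ω {x | (ω, x) ∈ s} ∂Λ := by rw [hFΛ]; rfl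
  have hτiter : ∀ n, MeasurePreserving (τ^[n]) α α := fun n => hτpres.iterate n
  have hcompint : ∀ (n : ℕ) (h : Ω × K → ℝ), AEStronglyMeasurable h α →
      ∫ p, h (τ^[n] p) ∂α = ∫ p, h p ∂α := by
    intro n h hm
    conv_rhs => rw [← (hτiter n).map_eq]
    rw [integral_map (hτn n).aemeasurable (by rwa [(hτiter n).map_eq])]
  -- integrability helper
  have intb : ∀ (h : Ω × K → ℝ), Measurable h → ∀ C : ℝ, (∀ p, |h p| ≤ C) →
      Integrable h α := fun h hm C hb => integrable_of_bdd' hm.aestronglyMeasurable hb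
  -- the key convergence for continuous functions bounded by 1
  have key : ∀ f g : Ω × K → ℝ, Continuous f → Continuous g →
      (∀ p, |f p| ≤ 1) → (∀ p, |g p| ≤ 1) →
      Tendsto (fun n : ℕ => ∫ p, f (τ^[n] p) * g p ∂α) atTop
        (nhds ((∫ p, f p ∂α) * (∫ p, g p ∂α))) := by
    intro f g hf hg hfb hgb
    have hu : Measurable (fun ω => ∫ y, f (ω, y) ∂κ ω) :=
      hf.stronglyMeasurable.integral_kernel_prod_right'.measurable
    have hv : Measurable (fun ω => ∫ x, g (ω, x) ∂κ ω) :=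
      hg.stronglyMeasurable.integral_kernel_prod_right'.measurable
    have hub : ∀ ω, |∫ y, f (ω, y) ∂κ ω| ≤ 1 := by
      intro ω
      rw [← Real.norm_eq_abs]
      calc ‖∫ y, f (ω, y) ∂κ ω‖ ≤ 1 * ((κ ω) Set.univ).toReal :=
            norm_integral_le_of_norm_le_const
              (ae_of_all _ fun y => by simpa [Real.norm_eq_abs] using hfb (ω, y))
        _ = 1 := by simp
    have hvb : ∀ ω, |∫ x, g (ω, x) ∂κ ω| ≤ 1 := by
      intro ω
      rw [← Real.norm_eq_abs]
      calc ‖∫ x, g (ω, x) ∂κ ω‖ ≤ 1 * ((κ ω) Set.univ).toReal :=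
            norm_integral_le_of_norm_le_const
              (ae_of_all _ fun x => by simpa [Real.norm_eq_abs] using hgb (ω, x))
        _ = 1 := by simp
    have hΦm : ∀ n, Measurable fun p : Ω × K => f (τ^[n] p) * g p :=
      fun n => (hf.measurable.comp (hτn n)).mul hg.measurable
    have hΦb : ∀ n (p : Ω × K), |f (τ^[n] p) * g p| ≤ 1 := by
      intro n p
      rw [abs_mul]
      nlinarith [hfb (τ^[n] p), hgb p, abs_nonneg (f (τ^[n] p)), abs_nonneg (g p)]
    have hΦint : ∀ n, Integrable (fun p => f (τ^[n] p) * g p) α :=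
      fun n => intb _ (hΦm n) 1 (hΦb n)
    have hfub : ∀ n, ∫ p, f (τ^[n] p) * g p ∂α
        = ∫ ω, (∫ x, f (τ^[n] (ω, x)) * g (ω, x) ∂κ ω) ∂Λ := by
      intro n
      have h := hΦint n
      rw [hαeq] at h ⊢
      exact Measure.integral_compProd h
    -- decorrelation term
    set D : ℕ → Ω → ℝ := fun n ω =>
      (∫ x, f (τ^[n] (ω, x)) * g (ω, x) ∂κ ω) -
        (∫ y, f (F^[n] ω, y) ∂κ (F^[n] ω)) * (∫ x, g (ω, x) ∂κ ω) with hD_def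
    have hinnerm : ∀ n, Measurable fun ω => ∫ x, f (τ^[n] (ω, x)) * g (ω, x) ∂κ ω :=
      fun n => (hΦm n).stronglyMeasurable.integral_kernel_prod_right'.measurable
    have hinnerb : ∀ n ω, |∫ x, f (τ^[n] (ω, x)) * g (ω, x) ∂κ ω| ≤ 1 := by
      intro n ω
      rw [← Real.norm_eq_abs]
      calc ‖∫ x, f (τ^[n] (ω, x)) * g (ω, x) ∂κ ω‖ ≤ 1 * ((κ ω) Set.univ).toReal :=
            norm_integral_le_of_norm_le_const
              (ae_of_all _ fun x => by rw [Real.norm_eq_abs]; exact hΦb n (ω, x))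
        _ = 1 := by simp
    have hDm : ∀ n, Measurable (D n) := by
      intro n
      exact (hinnerm n).sub ((hu.comp (hF.iterate n)).mul hv)
    have hDb : ∀ n ω, |D n ω| ≤ 2 := by
      intro n ω
      have h1 := hinnerb n ω
      have h2 : |(∫ y, f (F^[n] ω, y) ∂κ (F^[n] ω)) * (∫ x, g (ω, x) ∂κ ω)| ≤ 1 := by
        rw [abs_mul]
        nlinarith [hub (F^[n] ω), hvb ω, abs_nonneg (∫ y, f (F^[n] ω, y) ∂κ (F^[n] ω)),
          abs_nonneg (∫ x, g (ω, x) ∂κ ω)]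
      calc |D n ω| ≤ |∫ x, f (τ^[n] (ω, x)) * g (ω, x) ∂κ ω| +
            |(∫ y, f (F^[n] ω, y) ∂κ (F^[n] ω)) * (∫ x, g (ω, x) ∂κ ω)| := abs_sub _ _
        _ ≤ 2 := by linarith
    have hDtend : Tendsto (fun n => ∫ ω, D n ω ∂Λ) atTop (nhds 0) := by
      have h0 : (0 : ℝ) = ∫ (_ : Ω), (0 : ℝ) ∂Λ := by simp
      rw [h0]
      refine tendsto_integral_of_dominated_convergence (fun _ => 2)
        (fun n => (hDm n).aestronglyMeasurable) (integrable_const 2)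
        (fun n => ae_of_all _ fun ω => by simpa [Real.norm_eq_abs] using hDb n ω) ?_
      filter_upwards [hdecor] with ω hω
      exact hω f g hf hg
    have hmix' := hmix _ _ hu hv ⟨1, hub⟩ ⟨1, hvb⟩
    have hDint : ∀ n, Integrable (D n) Λ :=
      fun n => integrable_of_bdd' (hDm n).aestronglyMeasurable (hDb n)
    have huvint : ∀ n, Integrable
        (fun ω => (∫ y, f (F^[n] ω, y) ∂κ (F^[n] ω)) * (∫ x, g (ω, x) ∂κ ω)) Λ := by
      intro n
      refine integrable_of_bdd' (C := 1) ((hu.comp (hF.iterate n)).mul hv).aestronglyMeasurable ?_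
      intro ω
      rw [abs_mul]
      nlinarith [hub (F^[n] ω), hvb ω, abs_nonneg (∫ y, f (F^[n] ω, y) ∂κ (F^[n] ω)),
        abs_nonneg (∫ x, g (ω, x) ∂κ ω)]
    have hdecomp : ∀ n, ∫ p, f (τ^[n] p) * g p ∂α
        = ∫ ω, D n ω ∂Λ +
          ∫ ω, (∫ y, f (F^[n] ω, y) ∂κ (F^[n] ω)) * (∫ x, g (ω, x) ∂κ ω) ∂Λ := by
      intro n
      rw [hfub n, ← integral_add (hDint n) (huvint n)]
      refine integral_congr_ae (ae_of_all _ fun ω => ?_)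
      simp [hD_def]
    have hfα : ∫ p, f p ∂α = ∫ ω, ∫ y, f (ω, y) ∂κ ω ∂Λ := by
      have h : Integrable f α := intb f hf.measurable 1 hfb
      rw [hαeq] at h ⊢
      exact Measure.integral_compProd h
    have hgα : ∫ p, g p ∂α = ∫ ω, ∫ x, g (ω, x) ∂κ ω ∂Λ := by
      have h : Integrable g α := intb g hg.measurable 1 hgb
      rw [hαeq] at h ⊢
      exact Measure.integral_compProd h
    have hfinal := hDtend.add hmix'
    rw [zero_add] at hfinal
    have heq : (fun n : ℕ => ∫ p, f (τ^[n] p) * g p ∂α)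
        = fun n => ∫ ω, D n ω ∂Λ +
            ∫ ω, (∫ y, f (F^[n] ω, y) ∂κ (F^[n] ω)) * (∫ x, g (ω, x) ∂κ ω) ∂Λ :=
      funext hdecomp
    rw [heq, hfα, hgα]
    exact hfinal
  -- conclusion via approximation
  have hiAb : ∀ p : Ω × K, |A.indicator (1 : Ω × K → ℝ) p| ≤ 1 := by
    intro p; by_cases h : p ∈ A <;> simp [h]
  have hiBb : ∀ p : Ω × K, |B.indicator (1 : Ω × K → ℝ) p| ≤ 1 := by
    intro p; by_cases h : p ∈ B <;> simp [h]
  have hiAm : Measurable (A.indicator (1 : Ω × K → ℝ)) := measurable_one.indicator hA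
  have hiBm : Measurable (B.indicator (1 : Ω × K → ℝ)) := measurable_one.indicator hB
  have hInd : ∀ n, (α (τ^[n] ⁻¹' A ∩ B)).toReal
      = ∫ p, A.indicator 1 (τ^[n] p) * B.indicator 1 p ∂α := by
    intro n
    rw [← Measure.real_def, ← integral_indicator_one ((hτn n hA).inter hB)]
    refine integral_congr_ae (ae_of_all _ fun p => ?_)
    by_cases h1 : τ^[n] p ∈ A <;> by_cases h2 : p ∈ B <;>
      simp [Set.indicator_apply, h1, h2, Set.mem_preimage, Set.mem_inter_iff]
  rw [← ENNReal.tendsto_toReal_iff (fun n => measure_ne_top α _)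
    (ENNReal.mul_ne_top (measure_ne_top α A) (measure_ne_top α B)), ENNReal.toReal_mul]
  rw [Metric.tendsto_atTop]
  intro ε hε
  obtain ⟨f, hf, hf01, hfA⟩ := exists_cont_approx α hA (show (0:ℝ) < ε/8 by linarith)
  obtain ⟨g, hg, hg01, hgB⟩ := exists_cont_approx α hB (show (0:ℝ) < ε/8 by linarith)
  have hfb : ∀ p, |f p| ≤ 1 := fun p => abs_le.2 ⟨by linarith [(hf01 p).1], (hf01 p).2⟩
  have hgb : ∀ p, |g p| ≤ 1 := fun p => abs_le.2 ⟨by linarith [(hg01 p).1], (hg01 p).2⟩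
  obtain ⟨N, hN⟩ := Metric.tendsto_atTop.1 (key f g hf hg hfb hgb) (ε/2) (by linarith)
  refine ⟨N, fun n hn => ?_⟩
  have hN' := hN n hn
  rw [Real.dist_eq] at hN' ⊢
  -- L¹ distances
  have habsA : ∫ p, |A.indicator 1 p - f p| ∂α ≤ ε/8 :=
    le_trans (le_of_eq (integral_congr_ae (ae_of_all _ fun p => by rw [abs_sub_comm]))) hfA
  have habsB : ∫ p, |B.indicator 1 p - g p| ∂α ≤ ε/8 :=
    le_trans (le_of_eq (integral_congr_ae (ae_of_all _ fun p => by rw [abs_sub_comm]))) hgB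
  have hintabsA : Integrable (fun p => |A.indicator 1 p - f p|) α :=
    intb _ (hiAm.sub hf.measurable).abs 2 (fun p => by
      rw [abs_abs]; exact (abs_sub _ _).trans (by linarith [hiAb p, hfb p]))
  have hintabsB : Integrable (fun p => |B.indicator 1 p - g p|) α :=
    intb _ (hiBm.sub hg.measurable).abs 2 (fun p => by
      rw [abs_abs]; exact (abs_sub _ _).trans (by linarith [hiBb p, hgb p]))
  have hintA' : Integrable (fun p => |A.indicator 1 (τ^[n] p) - f (τ^[n] p)|) α :=
    intb _ ((hiAm.comp (hτn n)).sub (hf.measurable.comp (hτn n))).abs 2 (fun p => by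
      rw [abs_abs]; exact (abs_sub _ _).trans (by linarith [hiAb (τ^[n] p), hfb (τ^[n] p)]))
  have hint1 : Integrable (fun p => A.indicator 1 (τ^[n] p) * B.indicator 1 p) α :=
    intb _ ((hiAm.comp (hτn n)).mul hiBm) 1 (fun p => by
      rw [abs_mul]
      nlinarith [hiAb (τ^[n] p), hiBb p, abs_nonneg (A.indicator (1 : Ω × K → ℝ) (τ^[n] p)),
        abs_nonneg (B.indicator (1 : Ω × K → ℝ) p)])
  have hint2 : Integrable (fun p => f (τ^[n] p) * g p) α :=
    intb _ ((hf.measurable.comp (hτn n)).mul hg.measurable) 1 (fun p => by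
      rw [abs_mul]
      nlinarith [hfb (τ^[n] p), hgb p, abs_nonneg (f (τ^[n] p)), abs_nonneg (g p)])
  have est1 : |(α (τ^[n] ⁻¹' A ∩ B)).toReal - ∫ p, f (τ^[n] p) * g p ∂α| ≤ ε/4 := by
    rw [hInd n, ← integral_sub hint1 hint2]
    calc |∫ p, (A.indicator 1 (τ^[n] p) * B.indicator 1 p - f (τ^[n] p) * g p) ∂α|
        ≤ ∫ p, |A.indicator 1 (τ^[n] p) * B.indicator 1 p - f (τ^[n] p) * g p| ∂α :=
          abs_int_le α _
      _ ≤ ∫ p, (|A.indicator 1 (τ^[n] p) - f (τ^[n] p)| + |B.indicator 1 p - g p|) ∂α :=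
          integral_mono (hint1.sub hint2).abs (hintA'.add hintabsB)
            (fun p => abs_mul_sub_mul_le (hiBb p) (hfb (τ^[n] p)))
      _ = ∫ p, |A.indicator 1 (τ^[n] p) - f (τ^[n] p)| ∂α
            + ∫ p, |B.indicator 1 p - g p| ∂α := integral_add hintA' hintabsB
      _ = ∫ p, |A.indicator 1 p - f p| ∂α + ∫ p, |B.indicator 1 p - g p| ∂α := by
          rw [hcompint n (fun p => |A.indicator 1 p - f p|)
            ((hiAm.sub hf.measurable).abs.aestronglyMeasurable)]
      _ ≤ ε/8 + ε/8 := add_le_add habsA habsB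
      _ = ε/4 := by ring
  have intf : Integrable f α := intb f hf.measurable 1 hfb
  have intg : Integrable g α := intb g hg.measurable 1 hgb
  have intiA : Integrable (A.indicator (1 : Ω × K → ℝ)) α := intb _ hiAm 1 hiAb
  have intiB : Integrable (B.indicator (1 : Ω × K → ℝ)) α := intb _ hiBm 1 hiBb
  have hgle : |∫ p, g p ∂α| ≤ 1 := by
    rw [← Real.norm_eq_abs]
    calc ‖∫ p, g p ∂α‖ ≤ 1 * (α Set.univ).toReal :=
          norm_integral_le_of_norm_le_const
            (ae_of_all _ fun p => by rw [Real.norm_eq_abs]; exact hgb p)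
      _ = 1 := by simp
  have hAle : |(α A).toReal| ≤ 1 := by
    rw [abs_of_nonneg ENNReal.toReal_nonneg]
    have h1 : (α A).toReal ≤ (α Set.univ).toReal :=
      ENNReal.toReal_mono (measure_ne_top _ _) (measure_mono (Set.subset_univ A))
    simpa using h1
  have hdiffA : |(∫ p, f p ∂α) - (α A).toReal| ≤ ε/8 := by
    rw [← Measure.real_def, ← integral_indicator_one hA, ← integral_sub intf intiA]
    exact le_trans (abs_int_le α _) hfA
  have hdiffB : |(∫ p, g p ∂α) - (α B).toReal| ≤ ε/8 := by
    rw [← Measure.real_def, ← integral_indicator_one hB, ← integral_sub intg intiB]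
    exact le_trans (abs_int_le α _) hgB
  have est2 : |(∫ p, f p ∂α) * (∫ p, g p ∂α) - (α A).toReal * (α B).toReal| ≤ ε/4 :=
    le_trans (abs_mul_sub_mul_le hgle hAle) (by linarith)
  have t1 := abs_sub_le ((α (τ^[n] ⁻¹' A ∩ B)).toReal) (∫ p, f (τ^[n] p) * g p ∂α)
    ((α A).toReal * (α B).toReal)
  have t2 := abs_sub_le (∫ p, f (τ^[n] p) * g p ∂α)
    ((∫ p, f p ∂α) * (∫ p, g p ∂α)) ((α A).toReal * (α B).toReal)
  linarith
end
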